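/- Let abc be a nondegenerate triangle in the Euclidean plane with an affine linear function f satisfying f(a) < f(b) < f(c) and ∇f not parallel to any edge. If all interior angles of the triangle are strictly less than π/2 (the triangle is acute), then the edge bc has an out-flow: −∇f points into the interior of the triangle from interior points of bc. -/

import Mathlib

open EuclideanGeometry Real Set

/-- The edge `e` (a relatively open segment) of the region `P` has an *out-flow* for the
(constant) negative gradient field `-g`: from points of `e`, flowing along `-g` for small
positive time one enters the interior of `P`. -/
def HasOutFlow (P : Set (EuclideanSpace ℝ (Fin 2))) (g : EuclideanSpace ℝ (Fin 2))
    (e : Set (EuclideanSpace ℝ (Fin 2))) : Prop :=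
  ∀ x ∈ e, ∀ᶠ t in nhdsWithin (0 : ℝ) (Set.Ioi 0), x + t • (-g) ∈ interior P

private lemma inner_pos_of_angle_lt_pi_div_two {E : Type*} [NormedAddCommGroup E]
    [InnerProductSpace ℝ E] {x y : E} (hx : x ≠ 0) (hy : y ≠ 0)
    (h : InnerProductGeometry.angle x y < π / 2) : 0 < (inner ℝ x y : ℝ) := by
  have h0 := InnerProductGeometry.angle_nonneg x y
  have hc : 0 < Real.cos (InnerProductGeometry.angle x y) :=
    Real.cos_pos_of_mem_Ioo ⟨by linarith [Real.pi_pos], h⟩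
  rw [InnerProductGeometry.cos_angle] at hc
  have hn : 0 < ‖x‖ * ‖y‖ := mul_pos (norm_pos_iff.mpr hx) (norm_pos_iff.mpr hy)
  have h2 := mul_pos hc hn
  rwa [div_mul_cancel₀ _ hn.ne'] at h2

/-- For a nondegenerate triangle `abc` in the Euclidean plane and an affine
linear function `f` with gradient `g ≠ 0`, `f(a) < f(b) < f(c)`, gradient not parallel to
any edge: if the triangle is acute (all interior angles `< π/2`), then the edge `bc` has
an out-flow: `-g` points into the interior of the triangle from interior points of `bc`. -/
theorem stmt5 (a b c g : EuclideanSpace ℝ (Fin 2)) (c₀ : ℝ)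
    (f : EuclideanSpace ℝ (Fin 2) → ℝ)
    (hf : ∀ x, f x = inner ℝ g x + c₀)
    (hg : g ≠ 0)
    (hnd : AffineIndependent ℝ ![a, b, c])
    (hfab : f a < f b) (hfbc : f b < f c)
    (hpar_ab : ∀ t : ℝ, g ≠ t • (b - a))
    (hpar_bc : ∀ t : ℝ, g ≠ t • (c - b))
    (hpar_ac : ∀ t : ℝ, g ≠ t • (c - a))
    (hacute : ∠ b a c < π / 2 ∧ ∠ a b c < π / 2 ∧ ∠ a c b < π / 2) :
    HasOutFlow (convexHull ℝ {a, b, c}) g (openSegment ℝ b c) := by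
  classical
  obtain ⟨hA, hB, hC⟩ := hacute
  have hgv : ∀ x y : EuclideanSpace ℝ (Fin 2), (inner ℝ g (x - y) : ℝ) = f x - f y := by
    intro x y; rw [hf, hf, inner_sub_right]; ring
  have hinj := hnd.injective
  have hab : a ≠ b := fun h =>
    absurd (hinj (show (![a, b, c] : Fin 3 → _) 0 = ![a, b, c] 1 by simp [h])) (by decide)
  have hac : a ≠ c := fun h =>
    absurd (hinj (show (![a, b, c] : Fin 3 → _) 0 = ![a, b, c] 2 by simp [h])) (by decide)
  have hbc : b ≠ c := fun h =>
    absurd (hinj (show (![a, b, c] : Fin 3 → _) 1 = ![a, b, c] 2 by simp [h])) (by decide)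
  set v : EuclideanSpace ℝ (Fin 2) := c - b with hv_def
  have hv : v ≠ 0 := sub_ne_zero.mpr hbc.symm
  have hip : ∀ z : EuclideanSpace ℝ (Fin 2), z ≠ 0 → 0 < (inner ℝ z z : ℝ) := fun z hz => by
    rw [real_inner_self_eq_norm_sq]; exact pow_pos (norm_pos_iff.mpr hz) 2
  have hvv : 0 < (inner ℝ v v : ℝ) := hip v hv
  -- angle at b
  have hB' : 0 < (inner ℝ (a - b) v : ℝ) := by
    rw [EuclideanGeometry.angle, vsub_eq_sub, vsub_eq_sub] at hB
    exact inner_pos_of_angle_lt_pi_div_two (sub_ne_zero.mpr hab) hv hB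
  -- angle at c
  have hC' : 0 < (inner ℝ (c - a) v : ℝ) := by
    rw [EuclideanGeometry.angle, vsub_eq_sub, vsub_eq_sub] at hC
    have h := inner_pos_of_angle_lt_pi_div_two (sub_ne_zero.mpr hac)
      (sub_ne_zero.mpr hbc) hC
    have : (inner ℝ (c - a) v : ℝ) = inner ℝ (a - c) (b - c) := by
      rw [show c - a = -(a - c) by abel, show v = -(b - c) by rw [hv_def]; abel,
        inner_neg_neg]
    rw [this]; exact h
  set s : ℝ := (inner ℝ (a - b) v : ℝ) / (inner ℝ v v : ℝ) with hs_def
  have hs0 : 0 < s := div_pos hB' hvv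
  have hs1 : s < 1 := by
    rw [hs_def, div_lt_one hvv]
    have h1 : (inner ℝ (c - a) v : ℝ) = inner ℝ v v - inner ℝ (a - b) v := by
      rw [← inner_sub_left]; congr 1; rw [hv_def]; abel
    linarith
  set p : EuclideanSpace ℝ (Fin 2) := b + s • v with hp_def
  set w : EuclideanSpace ℝ (Fin 2) := a - p with hw_def
  have hwv : (inner ℝ w v : ℝ) = 0 := by
    have : w = (a - b) - s • v := by rw [hw_def, hp_def]; abel
    rw [this, inner_sub_left, real_inner_smul_left, hs_def,
      div_mul_cancel₀ _ hvv.ne']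
    ring
  have hgvval : (inner ℝ g v : ℝ) = f c - f b := hgv c b
  have hfp : f b < f p := by
    have h1 : (inner ℝ g (p - b) : ℝ) = f p - f b := hgv p b
    have h2 : p - b = s • v := by rw [hp_def]; abel
    rw [h2, real_inner_smul_right, hgvval] at h1
    nlinarith
  have hw : w ≠ 0 := by
    intro h
    have : a = p := by rwa [hw_def, sub_eq_zero] at h
    rw [this] at hfab; linarith
  have hww : 0 < (inner ℝ w w : ℝ) := hip w hw
  have hgw : (inner ℝ g w : ℝ) < 0 := by
    have := hgv a p
    rw [← hw_def] at this
    rw [this]; linarith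
  set δ : ℝ := (inner ℝ g w : ℝ) / (inner ℝ w w : ℝ) with hδ_def
  have hδ : δ < 0 := div_neg_of_neg_of_pos hgw hww
  -- decompose g = δ • w + τ • v
  have hspan : (Submodule.span ℝ {w})ᗮ = Submodule.span ℝ {v} := by
    have hle : Submodule.span ℝ {v} ≤ (Submodule.span ℝ {w})ᗮ := by
      rw [Submodule.span_singleton_le_iff_mem,
        Submodule.mem_orthogonal_singleton_iff_inner_right]
      exact hwv
    have h1 : Module.finrank ℝ (Submodule.span ℝ {v} : Submodule ℝ _) = 1 := finrank_span_singleton hv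
    have h2 : Module.finrank ℝ ↥((Submodule.span ℝ {w})ᗮ) = 1 := by
      have h3 := Submodule.finrank_add_finrank_orthogonal
        (Submodule.span ℝ {w})
      rw [finrank_span_singleton hw, finrank_euclideanSpace_fin] at h3
      omega
    exact (Submodule.eq_of_le_of_finrank_eq hle (h1.trans h2.symm)).symm
  obtain ⟨τ, hτ⟩ : ∃ τ : ℝ, g - δ • w = τ • v := by
    have hmem : g - δ • w ∈ (Submodule.span ℝ {w})ᗮ := by
      rw [Submodule.mem_orthogonal_singleton_iff_inner_right, inner_sub_right,
        real_inner_smul_right, real_inner_comm, hδ_def, div_mul_cancel₀ _ hww.ne']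
      ring
    rw [hspan] at hmem
    exact (Submodule.mem_span_singleton.mp hmem).imp fun t h => h.symm
  -- affine basis
  have hspan_top : affineSpan ℝ (Set.range ![a, b, c]) = ⊤ := by
    rw [hnd.affineSpan_eq_top_iff_card_eq_finrank_add_one]
    simp [finrank_euclideanSpace_fin]
  let B : AffineBasis (Fin 3) ℝ (EuclideanSpace ℝ (Fin 2)) := ⟨![a, b, c], hnd, hspan_top⟩
  have hBa : B 0 = a := rfl
  have hBb : B 1 = b := rfl
  have hBc : B 2 = c := rfl
  have hint : interior (convexHull ℝ ({a, b, c} : Set (EuclideanSpace ℝ (Fin 2))))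
      = {x | ∀ i, 0 < B.coord i x} := by
    have hr : Set.range (B : Fin 3 → EuclideanSpace ℝ (Fin 2)) = {a, b, c} := by
      show Set.range ![a, b, c] = _
      rw [Matrix.range_cons, Matrix.range_cons, Matrix.range_cons_empty]
      simp [Set.insert_def]
      ext x; simp; tauto
    rw [← hr, B.interior_convexHull]
  -- coordinate values
  have hca : ∀ i : Fin 3, B.coord i a = if i = 0 then 1 else 0 := fun i => by
    rw [← hBa, B.coord_apply]
  have hcb : ∀ i : Fin 3, B.coord i b = if i = 1 then 1 else 0 := fun i => by
    rw [← hBb, B.coord_apply]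
  have hcc : ∀ i : Fin 3, B.coord i c = if i = 2 then 1 else 0 := fun i => by
    rw [← hBc, B.coord_apply]
  -- linear parts
  have hLv : ∀ i : Fin 3, (B.coord i).linear v = B.coord i c - B.coord i b := fun i => by
    have := (B.coord i).linearMap_vsub c b
    rwa [vsub_eq_sub, vsub_eq_sub] at this
  have hcp : ∀ i : Fin 3, B.coord i p = B.coord i b + s * (B.coord i c - B.coord i b) := by
    intro i
    have h1 : p = (s • v) +ᵥ b := by rw [hp_def]; simp [add_comm]
    rw [h1, AffineMap.map_vadd, map_smul, hLv i, vadd_eq_add, smul_eq_mul]; ring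
  have hL0v : (B.coord 0).linear v = 0 := by
    rw [hLv 0, hcb 0, hcc 0]; simp
  have hcp0 : B.coord 0 p = 0 := by rw [hcp 0, hcb 0, hcc 0]; simp
  have hL0w : (B.coord 0).linear w = 1 := by
    have h1 := (B.coord 0).linearMap_vsub a p
    rw [vsub_eq_sub, vsub_eq_sub, ← hw_def, hcp0, hca 0] at h1
    rw [h1]; simp
  have hL0g : (B.coord 0).linear g = δ := by
    have hgdec : g = δ • w + τ • v := by rw [← hτ]; abel
    rw [hgdec, map_add, map_smul, map_smul, hL0v, hL0w, smul_eq_mul, smul_zero]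
    ring
  -- key formula for the flow
  have hkey : ∀ (i : Fin 3) (t : ℝ) (y : EuclideanSpace ℝ (Fin 2)),
      B.coord i (y + t • (-g)) = B.coord i y - t * (B.coord i).linear g := by
    intro i t y
    rw [show y + t • (-g) = (t • (-g)) +ᵥ y from add_comm _ _, AffineMap.map_vadd,
      map_smul, map_neg, vadd_eq_add, smul_eq_mul]
    ring
  have hcline : ∀ (i : Fin 3) (r : ℝ),
      B.coord i (b + r • v) = B.coord i b + r * (B.coord i c - B.coord i b) := by
    intro i r
    have h1 : b + r • v = (r • v) +ᵥ b := add_comm _ _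
    rw [h1, AffineMap.map_vadd, map_smul, hLv i, vadd_eq_add, smul_eq_mul]; ring
  -- now the main argument
  intro x hx
  rw [openSegment_eq_image_lineMap] at hx
  obtain ⟨u, hu, hx⟩ := hx
  have hxval : x = b + u • v := by
    rw [← hx, AffineMap.lineMap_apply, vsub_eq_sub, vadd_eq_add, ← hv_def]; abel
  have hC0 : B.coord 0 x = 0 := by rw [hxval, hcline 0, hcb 0, hcc 0]; simp
  have hC1 : 0 < B.coord 1 x := by
    rw [hxval, hcline 1, hcb 1, hcc 1]
    have := hu.2; simp; linarith
  have hC2 : 0 < B.coord 2 x := by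
    rw [hxval, hcline 2, hcb 2, hcc 2]
    have := hu.1; simp; linarith
  have E0 : ∀ᶠ t in nhdsWithin (0 : ℝ) (Set.Ioi 0),
      0 < B.coord 0 (x + t • (-g)) := by
    filter_upwards [self_mem_nhdsWithin] with t ht
    rw [hkey 0, hC0, hL0g]
    rw [Set.mem_Ioi] at ht
    have h2 : 0 < t * -δ := mul_pos ht (neg_pos.mpr hδ)
    rw [mul_neg] at h2
    linarith
  have Egen : ∀ i : Fin 3, 0 < B.coord i x →
      ∀ᶠ t in nhdsWithin (0 : ℝ) (Set.Ioi 0), 0 < B.coord i (x + t • (-g)) := by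
    intro i hi
    have hcont : Continuous fun t : ℝ => B.coord i x - t * (B.coord i).linear g := by
      fun_prop
    have h0 : (fun t : ℝ => B.coord i x - t * (B.coord i).linear g) 0 = B.coord i x := by
      simp
    have hev : ∀ᶠ t in nhds (0 : ℝ), 0 < B.coord i x - t * (B.coord i).linear g := by
      exact (hcont.tendsto 0).eventually_const_lt (by simpa using hi)
    refine (hev.filter_mono nhdsWithin_le_nhds).mono fun t ht => ?_
    rwa [hkey i]
  rw [hint]
  refine ((E0.and ((Egen 1 hC1).and (Egen 2 hC2))).mono ?_)
  rintro t ⟨h0, h1, h2⟩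
  intro i
  fin_cases i <;> assumption
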